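/- Let a ≥ 2 and b ≥ 1 be integers, and let K be a colored regularity graph such that there is no colored homomorphism from K_a + E_b (the disjoint union of a complete graph on a vertices and an edgeless graph on b vertices) into K. Then f_K((a−1)/(a+b−1)) ≥ 1/(a+b−1). -/

import Mathlib

/-- The three possible colors of an edge of a colored regularity graph. -/
inductive EColor : Type
  | white
  | gray
  | black
deriving DecidableEq

/-- A colored regularity graph (CRG): a finite nonempty vertex set (here `Fin n`),
each vertex colored white (`vcol i = false`) or black (`vcol i = true`), and each
unordered pair of distinct vertices colored white, gray or black. -/
structure CRG : Type where
  n : ℕ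
  npos : 0 < n
  vcol : Fin n → Bool
  ecol : Fin n → Fin n → EColor
  ecol_symm : ∀ i j, ecol i j = ecol j i

namespace CRG

/-- The function `f_K(p) = (1/k²)[p(|VW| + 2|EW|) + (1-p)(|VB| + 2|EB|)]`; the
counts over ordered pairs of distinct vertices give `2|EW|` and `2|EB|`. -/
noncomputable def fK (K : CRG) (p : ℝ) : ℝ :=
  (1 / (K.n : ℝ) ^ 2) *
    (p * (((Finset.univ.filter (fun i : Fin K.n => K.vcol i = false)).card : ℝ)
        + ((Finset.univ.filter (fun ij : Fin K.n × Fin K.n =>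
            ij.1 ≠ ij.2 ∧ K.ecol ij.1 ij.2 = EColor.white)).card : ℝ))
   + (1 - p) * (((Finset.univ.filter (fun i : Fin K.n => K.vcol i = true)).card : ℝ)
        + ((Finset.univ.filter (fun ij : Fin K.n × Fin K.n =>
            ij.1 ≠ ij.2 ∧ K.ecol ij.1 ij.2 = EColor.black)).card : ℝ)))

/-- The matrix `M_K(p)`. -/
noncomputable def M (K : CRG) (p : ℝ) : Matrix (Fin K.n) (Fin K.n) ℝ :=
  Matrix.of fun i j =>
    if i = j then (if K.vcol i then 1 - p else p)
    else
      match K.ecol i j with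
      | EColor.white => p
      | EColor.gray => 0
      | EColor.black => 1 - p

/-- The function `g_K(p)`: the minimum (here: infimum, which is attained) of the
quadratic form `uᵀ M_K(p) u` over the standard simplex. -/
noncomputable def gK (K : CRG) (p : ℝ) : ℝ :=
  sInf { x : ℝ | ∃ u : Fin K.n → ℝ, (∀ i, 0 ≤ u i) ∧ (∑ i, u i) = 1 ∧
    x = ∑ i, ∑ j, u i * K.M p i j * u j }

end CRG

/-- A colored homomorphism from a simple graph `F` to a CRG `K`. -/
def CHom {V : Type} (F : SimpleGraph V) (K : CRG) : Prop :=
  ∃ φ : V → Fin K.n,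
    (∀ u v : V, F.Adj u v →
      (φ u = φ v ∧ K.vcol (φ u) = true) ∨
      (φ u ≠ φ v ∧ K.ecol (φ u) (φ v) ≠ EColor.white)) ∧
    (∀ u v : V, u ≠ v → ¬ F.Adj u v →
      (φ u = φ v ∧ K.vcol (φ u) = false) ∨
      (φ u ≠ φ v ∧ K.ecol (φ u) (φ v) ≠ EColor.black))

/-- `K_a + E_b`: the disjoint union of a complete graph on `a` vertices and an
edgeless graph on `b` vertices. -/
def cliquePlusEmpty (a b : ℕ) : SimpleGraph (Fin a ⊕ Fin b) where
  Adj x y := x ≠ y ∧ x.isLeft ∧ y.isLeft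
  symm := by
    refine ⟨?_⟩
    intro x y h
    exact ⟨h.1.symm, h.2.2, h.2.1⟩
  loopless := by
    refine ⟨?_⟩
    intro x h
    exact h.1 rfl

set_option linter.unusedVariables false
set_option linter.unnecessarySeqFocus false

namespace KaEb
open Finset

noncomputable def MM (a b : ℕ) (K : CRG) (i j : Fin K.n) : ℝ :=
  if i = j then (if K.vcol i then (b : ℝ) - 1 else (a : ℝ) - 2)
  else
    match K.ecol i j with
    | EColor.white => (a : ℝ) - 2
    | EColor.gray => -1
    | EColor.black => (b : ℝ) - 1

lemma MM_symm (a b : ℕ) (K : CRG) (i j : Fin K.n) : MM a b K i j = MM a b K j i := by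
  unfold MM
  by_cases hij : i = j
  · subst hij; rfl
  · rw [if_neg hij, if_neg (Ne.symm hij : ¬ j = i), K.ecol_symm i j]

section Quad
variable {n : ℕ}

noncomputable def Bf (M : Fin n → Fin n → ℝ) (x y : Fin n → ℝ) : ℝ :=
  ∑ i, ∑ j, M i j * x i * y j

lemma Bf_expand (M : Fin n → Fin n → ℝ) (hsym : ∀ i j, M i j = M j i)
    (u : Fin n → ℝ) (i j : Fin n) (t : ℝ) :
    Bf M (fun k => u k + (if k = i then t else 0) - (if k = j then t else 0))
         (fun k => u k + (if k = i then t else 0) - (if k = j then t else 0))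
    = Bf M u u + 2*t*((∑ k, M i k * u k) - (∑ k, M j k * u k))
      + t^2*(M i i + M j j - 2 * M i j) := by
  have hdel : ∀ (c : Fin n → ℝ) (i0 : Fin n), (∑ l, c l * (if l = i0 then t else 0)) = c i0 * t := by
    intro c i0
    simp only [mul_ite, mul_zero]
    rw [Finset.sum_ite_eq' Finset.univ i0 (fun l => c l * t)]
    simp
  have hdel' : ∀ (c : Fin n → ℝ) (i0 : Fin n), (∑ k, (if k = i0 then t else 0) * c k) = t * c i0 := by
    intro c i0
    simp only [ite_mul, zero_mul]
    rw [Finset.sum_ite_eq' Finset.univ i0 (fun k => t * c k)]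
    simp
  have key : ∀ k l : Fin n, M k l *
      (u k + (if k = i then t else 0) - (if k = j then t else 0)) *
      (u l + (if l = i then t else 0) - (if l = j then t else 0))
      = M k l * u k * u l
        + ((M k l * u k) * (if l = i then t else 0) - (M k l * u k) * (if l = j then t else 0))
        + ((if k = i then t else 0) * (M k l * u l) - (if k = j then t else 0) * (M k l * u l))
        + ((if k = i then t else 0) * ((fun l' => M k l' * (if l' = i then t else 0)) l)
           - (if k = i then t else 0) * ((fun l' => M k l' * (if l' = j then t else 0)) l)
           - ((if k = j then t else 0) * ((fun l' => M k l' * (if l' = i then t else 0)) l)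
              - (if k = j then t else 0) * ((fun l' => M k l' * (if l' = j then t else 0)) l))) := by
    intro k l; simp only []; ring
  unfold Bf
  rw [Finset.sum_congr rfl fun k _ => Finset.sum_congr rfl fun l _ => key k l]
  simp only [Finset.sum_add_distrib, Finset.sum_sub_distrib, ← Finset.mul_sum]
  rw [Finset.sum_congr rfl fun k (_ : k ∈ univ) => hdel (fun l => M k l * u k) i]
  rw [Finset.sum_congr rfl fun k (_ : k ∈ univ) => hdel (fun l => M k l * u k) j]
  rw [Finset.sum_congr rfl fun k (_ : k ∈ univ) =>
        congrArg (fun z => (if k = i then t else 0) * z) (hdel (fun l => M k l) i)]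
  rw [Finset.sum_congr rfl fun k (_ : k ∈ univ) =>
        congrArg (fun z => (if k = i then t else 0) * z) (hdel (fun l => M k l) j)]
  rw [Finset.sum_congr rfl fun k (_ : k ∈ univ) =>
        congrArg (fun z => (if k = j then t else 0) * z) (hdel (fun l => M k l) i)]
  rw [Finset.sum_congr rfl fun k (_ : k ∈ univ) =>
        congrArg (fun z => (if k = j then t else 0) * z) (hdel (fun l => M k l) j)]
  rw [hdel' (fun k => M k i * t) i, hdel' (fun k => M k j * t) i,
      hdel' (fun k => M k i * t) j, hdel' (fun k => M k j * t) j,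
      hdel' (fun k => ∑ l, M k l * u l) i, hdel' (fun k => ∑ l, M k l * u l) j]
  have h1 : (∑ k, M k i * u k * t) = t * ∑ k, M i k * u k := by
    rw [Finset.mul_sum]
    exact Finset.sum_congr rfl fun k _ => by rw [hsym k i]; ring
  have h2 : (∑ k, M k j * u k * t) = t * ∑ k, M j k * u k := by
    rw [Finset.mul_sum]
    exact Finset.sum_congr rfl fun k _ => by rw [hsym k j]; ring
  rw [h1, h2, hsym j i]
  ring

lemma merge_step (M : Fin n → Fin n → ℝ) (hsym : ∀ i j, M i j = M j i)
    (u : Fin n → ℝ) (hu : ∀ k, 0 ≤ u k) (i j : Fin n) (hij : i ≠ j)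
    (hui : u i ≠ 0)
    (hA : M i i + M j j ≤ 2 * M i j)
    (hL : (∑ k, M i k * u k) ≤ (∑ k, M j k * u k)) :
    ∃ u' : Fin n → ℝ, (∀ k, 0 ≤ u' k) ∧
      (∀ k, u' k ≠ 0 → (k ≠ j ∧ u k ≠ 0)) ∧ Bf M u' u' ≤ Bf M u u := by
  refine ⟨fun k => u k + (if k = i then u j else 0) - (if k = j then u j else 0), ?_, ?_, ?_⟩
  · intro k
    show 0 ≤ u k + (if k = i then u j else 0) - (if k = j then u j else 0)
    by_cases hki : k = i
    · subst hki
      rw [if_pos rfl, if_neg (fun hh : k = j => hij hh)]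
      have := hu k; have := hu j; linarith
    · by_cases hkj : k = j
      · subst hkj
        rw [if_neg hki, if_pos rfl]
        simp
      · rw [if_neg hki, if_neg hkj]
        have := hu k; linarith
  · intro k hk
    replace hk : u k + (if k = i then u j else 0) - (if k = j then u j else 0) ≠ 0 := hk
    by_cases hkj : k = j
    · exfalso; apply hk
      subst hkj
      rw [if_neg (fun hh : k = i => hij hh.symm), if_pos rfl]
      ring
    · refine ⟨hkj, ?_⟩
      by_cases hki : k = i
      · subst hki; exact hui
      · intro h0
        apply hk
        rw [if_neg hki, if_neg hkj, h0]
        ring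
  · rw [Bf_expand M hsym u i j (u j)]
    have h1 : 2*(u j)*((∑ k, M i k * u k) - (∑ k, M j k * u k)) ≤ 0 := by
      apply mul_nonpos_of_nonneg_of_nonpos
      · have := hu j; linarith
      · linarith
    have h2 : (u j)^2*(M i i + M j j - 2 * M i j) ≤ 0 := by
      apply mul_nonpos_of_nonneg_of_nonpos
      · positivity
      · linarith
    linarith

end Quad

lemma homN1 (a b : ℕ) (K : CRG)
    (h : ¬ CHom (cliquePlusEmpty a b) K) (x y : Fin K.n)
    (hx : K.vcol x = false) (hy : K.vcol y = true) : K.ecol x y = EColor.black := by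
  by_contra hcon
  apply h
  have hxy : x ≠ y := fun he => by rw [he, hy] at hx; exact Bool.noConfusion hx
  refine ⟨Sum.elim (fun _ => y) (fun _ => x), ?_, ?_⟩
  · intro u v huv
    obtain ⟨hne, hl1, hl2⟩ := huv
    cases u with
    | inl i =>
      cases v with
      | inl i' => exact Or.inl ⟨rfl, hy⟩
      | inr m => simp at hl2
    | inr m => simp at hl1
  · intro u v hne hnadj
    cases u with
    | inl i =>
      cases v with
      | inl i' => exact absurd ⟨hne, rfl, rfl⟩ hnadj
      | inr m =>
        refine Or.inr ⟨hxy.symm, ?_⟩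
        rw [K.ecol_symm]; exact hcon
    | inr m =>
      cases v with
      | inl i' => exact Or.inr ⟨hxy, hcon⟩
      | inr m' => exact Or.inl ⟨rfl, hx⟩

lemma homN2 (a b : ℕ) (K : CRG) (h : ¬ CHom (cliquePlusEmpty a b) K)
    (T : Finset (Fin K.n)) (hcard : T.card = b + 1)
    (hblack : ∀ y ∈ T, K.vcol y = true)
    (hpair : ∀ y ∈ T, ∀ z ∈ T, y ≠ z → K.ecol y z ≠ EColor.black) : False := by
  apply h
  set e := T.orderIsoOfFin hcard with he
  have hmem : ∀ k, (e k : Fin K.n) ∈ T := fun k => (e k).2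
  have hnee : ∀ k k', k ≠ k' → (e k : Fin K.n) ≠ (e k' : Fin K.n) := by
    intro k k' hkk' heq
    exact hkk' (e.injective (Subtype.ext heq))
  refine ⟨Sum.elim (fun _ => (e 0 : Fin K.n)) (fun m => (e m.succ : Fin K.n)), ?_, ?_⟩
  · intro u v huv
    obtain ⟨hne', hl1, hl2⟩ := huv
    cases u with
    | inl i =>
      cases v with
      | inl i' => exact Or.inl ⟨rfl, hblack _ (hmem 0)⟩
      | inr m => simp at hl2
    | inr m => simp at hl1
  · intro u v hne' hnadj
    cases u with
    | inl i =>
      cases v with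
      | inl i' => exact absurd ⟨hne', rfl, rfl⟩ hnadj
      | inr m =>
        have hne0 : (0 : Fin (b+1)) ≠ m.succ := (Fin.succ_ne_zero m).symm
        exact Or.inr ⟨hnee 0 m.succ hne0, hpair _ (hmem 0) _ (hmem m.succ) (hnee 0 m.succ hne0)⟩
    | inr m =>
      cases v with
      | inl i' =>
        have hne0 : m.succ ≠ (0 : Fin (b+1)) := Fin.succ_ne_zero m
        exact Or.inr ⟨hnee m.succ 0 hne0, hpair _ (hmem m.succ) _ (hmem 0) (hnee m.succ 0 hne0)⟩
      | inr m' =>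
        have hmm : m ≠ m' := fun hh => hne' (by rw [hh])
        have hs : m.succ ≠ m'.succ := fun hh => hmm (Fin.succ_injective _ hh)
        exact Or.inr ⟨hnee _ _ hs, hpair _ (hmem m.succ) _ (hmem m'.succ) (hnee _ _ hs)⟩

lemma homN3 (a b : ℕ) (ha : 2 ≤ a) (K : CRG) (h : ¬ CHom (cliquePlusEmpty a b) K)
    (x : Fin K.n) (hx : K.vcol x = false)
    (T : Finset (Fin K.n)) (hcard : T.card = a - 1)
    (hxT : x ∉ T)
    (hwhite : ∀ y ∈ T, K.vcol y = false)
    (hgray : ∀ y ∈ T, K.ecol x y = EColor.gray)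
    (hpair : ∀ y ∈ T, ∀ z ∈ T, y ≠ z → K.ecol y z ≠ EColor.white) : False := by
  apply h
  set e := T.orderIsoOfFin hcard with he
  have hmem : ∀ k, (e k : Fin K.n) ∈ T := fun k => (e k).2
  have hnee : ∀ k k', k ≠ k' → (e k : Fin K.n) ≠ (e k' : Fin K.n) := by
    intro k k' hkk' heq
    exact hkk' (e.injective (Subtype.ext heq))
  set φl : Fin a → Fin K.n := fun k =>
    if hk : k.val = 0 then x else (e ⟨k.val - 1, by have := k.isLt; omega⟩ : Fin K.n) with hφl
  have hφ0 : ∀ k : Fin a, k.val = 0 → φl k = x := by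
    intro k hk; rw [hφl]; exact dif_pos hk
  have hφ1 : ∀ (k : Fin a) (hk : ¬ k.val = 0),
      φl k = (e ⟨k.val - 1, by have := k.isLt; omega⟩ : Fin K.n) := by
    intro k hk; rw [hφl]; exact dif_neg hk
  have hclique : ∀ k k' : Fin a, k ≠ k' → φl k ≠ φl k' ∧ K.ecol (φl k) (φl k') ≠ EColor.white := by
    intro k k' hkk'
    have hvne : k.val ≠ k'.val := fun hh => hkk' (Fin.ext hh)
    by_cases hk : k.val = 0 <;> by_cases hk' : k'.val = 0
    · exact absurd (hk.trans hk'.symm) hvne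
    · rw [hφ0 k hk, hφ1 k' hk']
      constructor
      · intro heq; exact hxT (heq ▸ hmem _)
      · rw [hgray _ (hmem _)]; intro hcc; exact EColor.noConfusion hcc
    · rw [hφ1 k hk, hφ0 k' hk']
      constructor
      · intro heq; exact hxT (heq ▸ hmem _)
      · rw [K.ecol_symm, hgray _ (hmem _)]; intro hcc; exact EColor.noConfusion hcc
    · rw [hφ1 k hk, hφ1 k' hk']
      have hidx : (⟨k.val - 1, by have := k.isLt; omega⟩ : Fin (a-1)) ≠ ⟨k'.val - 1, by have := k'.isLt; omega⟩ := by
        intro hh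
        have := Fin.mk.injEq (k.val - 1) _ (k'.val - 1) _ ▸ hh
        have hval : k.val - 1 = k'.val - 1 := Fin.mk.inj_iff.mp hh
        omega
      exact ⟨hnee _ _ hidx, hpair _ (hmem _) _ (hmem _) (hnee _ _ hidx)⟩
  refine ⟨Sum.elim φl (fun _ => x), ?_, ?_⟩
  · intro u v huv
    obtain ⟨hne', hl1, hl2⟩ := huv
    cases u with
    | inl i =>
      cases v with
      | inl i' =>
        have : i ≠ i' := fun hh => hne' (by rw [hh])
        exact Or.inr (hclique i i' this)
      | inr m => simp at hl2
    | inr m => simp at hl1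
  · intro u v hne' hnadj
    cases u with
    | inl i =>
      cases v with
      | inl i' => exact absurd ⟨hne', rfl, rfl⟩ hnadj
      | inr m =>
        by_cases hi : i.val = 0
        · exact Or.inl ⟨by rw [Sum.elim_inl, Sum.elim_inr, hφ0 i hi], by rw [Sum.elim_inl, hφ0 i hi]; exact hx⟩
        · refine Or.inr ⟨?_, ?_⟩
          · rw [Sum.elim_inl, Sum.elim_inr, hφ1 i hi]
            intro heq; exact hxT (heq ▸ hmem _)
          · rw [Sum.elim_inl, Sum.elim_inr, hφ1 i hi, K.ecol_symm, hgray _ (hmem _)]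
            intro hcc; exact EColor.noConfusion hcc
    | inr m =>
      cases v with
      | inl i =>
        by_cases hi : i.val = 0
        · exact Or.inl ⟨by rw [Sum.elim_inl, Sum.elim_inr, hφ0 i hi], by rw [Sum.elim_inr]; exact hx⟩
        · refine Or.inr ⟨?_, ?_⟩
          · rw [Sum.elim_inl, Sum.elim_inr, hφ1 i hi]
            intro heq; exact hxT (heq.symm ▸ hmem _)
          · rw [Sum.elim_inl, Sum.elim_inr, hφ1 i hi, hgray _ (hmem _)]
            intro hcc; exact EColor.noConfusion hcc
      | inr m' => exact Or.inl ⟨rfl, hx⟩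

lemma irred (a b : ℕ) (ha : 2 ≤ a) (hb : 1 ≤ b) (K : CRG)
    (h : ¬ CHom (cliquePlusEmpty a b) K)
    (u : Fin K.n → ℝ) (hu : ∀ i, 0 ≤ u i)
    (hgood : ∀ i j : Fin K.n, i ≠ j → u i ≠ 0 → u j ≠ 0 →
      2 * MM a b K i j < MM a b K i i + MM a b K j j) :
    0 ≤ Bf (MM a b K) u u := by
  have haR : (2:ℝ) ≤ (a:ℝ) := by exact_mod_cast ha
  have hbR : (1:ℝ) ≤ (b:ℝ) := by exact_mod_cast hb
  classical
  set S : Finset (Fin K.n) := univ.filter (fun i => u i ≠ 0) with hS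
  set WS : Finset (Fin K.n) := S.filter (fun i => K.vcol i = false) with hWS
  set BS : Finset (Fin K.n) := S.filter (fun i => ¬ K.vcol i = false) with hBS
  have hvW : ∀ i ∈ WS, K.vcol i = false := fun i hi => (mem_filter.mp hi).2
  have huS : ∀ i ∈ S, u i ≠ 0 := fun i hi => (mem_filter.mp hi).2
  have huW : ∀ i ∈ WS, u i ≠ 0 := fun i hi => huS i (mem_filter.mp hi).1
  have hvB : ∀ i ∈ BS, K.vcol i = true := by
    intro i hi
    have := (mem_filter.mp hi).2
    cases hcc : K.vcol i
    · exact absurd hcc this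
    · rfl
  have huB : ∀ i ∈ BS, u i ≠ 0 := fun i hi => huS i (mem_filter.mp hi).1
  -- no white edges inside WS
  have FW : ∀ i ∈ WS, ∀ j ∈ WS, i ≠ j → K.ecol i j ≠ EColor.white := by
    intro i hi j hj hij hcol
    have hlt := hgood i j hij (huW i hi) (huW j hj)
    have h1 : MM a b K i i = (a:ℝ) - 2 := by simp [MM, hvW i hi]
    have h2 : MM a b K j j = (a:ℝ) - 2 := by simp [MM, hvW j hj]
    have h3 : MM a b K i j = (a:ℝ) - 2 := by simp [MM, hij, hcol]
    rw [h1, h2, h3] at hlt; linarith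
  -- no black edges inside BS
  have FB : ∀ i ∈ BS, ∀ j ∈ BS, i ≠ j → K.ecol i j ≠ EColor.black := by
    intro i hi j hj hij hcol
    have hlt := hgood i j hij (huB i hi) (huB j hj)
    have h1 : MM a b K i i = (b:ℝ) - 1 := by simp [MM, hvB i hi]
    have h2 : MM a b K j j = (b:ℝ) - 1 := by simp [MM, hvB j hj]
    have h3 : MM a b K i j = (b:ℝ) - 1 := by simp [MM, hij, hcol]
    rw [h1, h2, h3] at hlt; linarith
  -- size of BS
  have cardBS : BS.card ≤ b := by
    by_contra hc
    push_neg at hc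
    obtain ⟨T, hTsub, hTcard⟩ := Finset.exists_subset_card_eq (show b + 1 ≤ BS.card from hc)
    exact homN2 a b K h T hTcard (fun y hy => hvB y (hTsub hy))
      (fun y hy z hz hyz => FB y (hTsub hy) z (hTsub hz) hyz)
  -- gray neighborhoods in WS
  set C : Fin K.n → Finset (Fin K.n) :=
    fun i => WS.filter (fun y => y ≠ i ∧ K.ecol i y = EColor.gray) with hC
  have hCmem : ∀ i y : Fin K.n, y ∈ C i ↔ (y ∈ WS ∧ y ≠ i ∧ K.ecol i y = EColor.gray) := by
    intro i y; rw [hC]; simp [mem_filter, and_assoc]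
  have cardC : ∀ i ∈ WS, (C i).card ≤ a - 2 := by
    intro i hi
    by_contra hc
    push_neg at hc
    obtain ⟨T, hTsub, hTcard⟩ := Finset.exists_subset_card_eq (show a - 1 ≤ (C i).card by omega)
    refine homN3 a b ha K h i (hvW i hi) T hTcard ?_ ?_ ?_ ?_
    · intro hmem
      exact ((hCmem i i).mp (hTsub hmem)).2.1 rfl
    · intro y hy; exact hvW y ((hCmem i y).mp (hTsub hy)).1
    · intro y hy; exact ((hCmem i y).mp (hTsub hy)).2.2
    · intro y hy z hz hyz
      exact FW y ((hCmem i y).mp (hTsub hy)).1 z ((hCmem i z).mp (hTsub hz)).1 hyz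
  -- restrict the sum to S
  have h0 : ∀ x, x ∉ S → u x = 0 := by
    intro x hx
    by_contra hne
    exact hx (mem_filter.mpr ⟨mem_univ x, hne⟩)
  have hQS : Bf (MM a b K) u u = ∑ i ∈ S, ∑ j ∈ S, MM a b K i j * u i * u j := by
    unfold Bf
    rw [show (∑ i, ∑ j, MM a b K i j * u i * u j)
        = ∑ i ∈ S, ∑ j, MM a b K i j * u i * u j from
      (Finset.sum_subset (Finset.subset_univ S) (fun x _ hx => by simp [h0 x hx])).symm]
    exact Finset.sum_congr rfl fun i _ =>
      (Finset.sum_subset (Finset.subset_univ S) (fun x _ hx => by simp [h0 x hx])).symm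
  -- split into four blocks
  have hsplit : (∑ i ∈ S, ∑ j ∈ S, MM a b K i j * u i * u j)
      = ((∑ i ∈ WS, ∑ j ∈ WS, MM a b K i j * u i * u j)
        + (∑ i ∈ WS, ∑ j ∈ BS, MM a b K i j * u i * u j))
        + ((∑ i ∈ BS, ∑ j ∈ WS, MM a b K i j * u i * u j)
        + (∑ i ∈ BS, ∑ j ∈ BS, MM a b K i j * u i * u j)) := by
    have hinner : ∀ i : Fin K.n, (∑ j ∈ S, MM a b K i j * u i * u j)
        = (∑ j ∈ WS, MM a b K i j * u i * u j) + (∑ j ∈ BS, MM a b K i j * u i * u j) :=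
      fun i => (Finset.sum_filter_add_sum_filter_not S _ _).symm
    calc (∑ i ∈ S, ∑ j ∈ S, MM a b K i j * u i * u j)
        = ∑ i ∈ S, ((∑ j ∈ WS, MM a b K i j * u i * u j) + (∑ j ∈ BS, MM a b K i j * u i * u j)) :=
          Finset.sum_congr rfl fun i _ => hinner i
      _ = (∑ i ∈ S, ∑ j ∈ WS, MM a b K i j * u i * u j)
          + (∑ i ∈ S, ∑ j ∈ BS, MM a b K i j * u i * u j) := Finset.sum_add_distrib
      _ = _ := by
          rw [← Finset.sum_filter_add_sum_filter_not S (fun i => K.vcol i = false)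
              (fun i => ∑ j ∈ WS, MM a b K i j * u i * u j),
            ← Finset.sum_filter_add_sum_filter_not S (fun i => K.vcol i = false)
              (fun i => ∑ j ∈ BS, MM a b K i j * u i * u j)]
          ring
  -- cross blocks nonneg
  have hWB : 0 ≤ ∑ i ∈ WS, ∑ j ∈ BS, MM a b K i j * u i * u j := by
    apply Finset.sum_nonneg; intro i hi
    apply Finset.sum_nonneg; intro j hj
    have hij : i ≠ j := by
      intro hh
      have h1 := hvW i hi
      have h2 := hvB j hj
      rw [hh] at h1; rw [h1] at h2; exact Bool.noConfusion h2
    have hec : K.ecol i j = EColor.black := homN1 a b K h i j (hvW i hi) (hvB j hj)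
    have : MM a b K i j = (b:ℝ) - 1 := by simp [MM, hij, hec]
    rw [this]
    exact mul_nonneg (mul_nonneg (by linarith) (hu i)) (hu j)
  have hBW : 0 ≤ ∑ i ∈ BS, ∑ j ∈ WS, MM a b K i j * u i * u j := by
    apply Finset.sum_nonneg; intro i hi
    apply Finset.sum_nonneg; intro j hj
    have hij : i ≠ j := by
      intro hh
      have h1 := hvB i hi
      have h2 := hvW j hj
      rw [hh] at h1; rw [h1] at h2; exact Bool.noConfusion h2
    have hec : K.ecol j i = EColor.black := homN1 a b K h j i (hvW j hj) (hvB i hi)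
    have hec' : K.ecol i j = EColor.black := by rw [K.ecol_symm]; exact hec
    have : MM a b K i j = (b:ℝ) - 1 := by simp [MM, hij, hec']
    rw [this]
    exact mul_nonneg (mul_nonneg (by linarith) (hu i)) (hu j)
  -- BB block
  have hBB : 0 ≤ ∑ i ∈ BS, ∑ j ∈ BS, MM a b K i j * u i * u j := by
    have hterm : ∀ i ∈ BS, ∀ j ∈ BS,
        ((if i = j then (b:ℝ) else 0) - 1) * (u i * u j) ≤ MM a b K i j * u i * u j := by
      intro i hi j hj
      by_cases hij : i = j
      · subst hij
        rw [if_pos rfl]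
        have : MM a b K i i = (b:ℝ) - 1 := by simp [MM, hvB i hi]
        rw [this]; ring_nf; exact le_refl _
      · rw [if_neg hij]
        have hMM : (-1 : ℝ) ≤ MM a b K i j := by
          cases hec : K.ecol i j
          · have : MM a b K i j = (a:ℝ) - 2 := by simp [MM, hij, hec]
            rw [this]; linarith
          · have : MM a b K i j = -1 := by simp [MM, hij, hec]
            rw [this]
          · exact absurd hec (FB i hi j hj hij)
        calc ((0:ℝ) - 1) * (u i * u j) = -1 * (u i * u j) := by ring
          _ ≤ MM a b K i j * (u i * u j) :=
            mul_le_mul_of_nonneg_right hMM (mul_nonneg (hu i) (hu j))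
          _ = MM a b K i j * u i * u j := by ring
    have hsum1 : ∑ i ∈ BS, ∑ j ∈ BS, ((if i = j then (b:ℝ) else 0) - 1) * (u i * u j)
        ≤ ∑ i ∈ BS, ∑ j ∈ BS, MM a b K i j * u i * u j :=
      Finset.sum_le_sum fun i hi => Finset.sum_le_sum fun j hj => hterm i hi j hj
    have hsum2 : ∑ i ∈ BS, ∑ j ∈ BS, ((if i = j then (b:ℝ) else 0) - 1) * (u i * u j)
        = (b:ℝ) * (∑ i ∈ BS, u i * u i) - (∑ i ∈ BS, u i) * (∑ i ∈ BS, u i) := by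
      have hper : ∀ i ∈ BS, ∑ j ∈ BS, ((if i = j then (b:ℝ) else 0) - 1) * (u i * u j)
          = (b:ℝ) * (u i * u i) - u i * ∑ j ∈ BS, u j := by
        intro i hi
        have : ∀ j, ((if i = j then (b:ℝ) else 0) - 1) * (u i * u j)
            = (if i = j then (b:ℝ) * (u i * u j) else 0) - u i * u j := by
          intro j; by_cases hij : i = j <;> simp [hij] <;> ring
        rw [Finset.sum_congr rfl fun j _ => this j, Finset.sum_sub_distrib,
          Finset.sum_ite_eq BS i (fun j => (b:ℝ) * (u i * u j)), if_pos hi, ← Finset.mul_sum]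
      rw [Finset.sum_congr rfl hper, Finset.sum_sub_distrib, ← Finset.mul_sum, ← Finset.sum_mul]
    have hCS : (∑ i ∈ BS, u i) * (∑ i ∈ BS, u i) ≤ (BS.card : ℝ) * ∑ i ∈ BS, u i * u i := by
      have := sq_sum_le_card_mul_sum_sq (s := BS) (f := u)
      calc (∑ i ∈ BS, u i) * (∑ i ∈ BS, u i) = (∑ i ∈ BS, u i)^2 := by ring
        _ ≤ (BS.card : ℝ) * ∑ i ∈ BS, (u i)^2 := this
        _ = (BS.card : ℝ) * ∑ i ∈ BS, u i * u i := by
            congr 1; exact Finset.sum_congr rfl fun i _ => sq (u i) ▸ by ring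
    have hcard : (BS.card : ℝ) ≤ (b : ℝ) := by exact_mod_cast cardBS
    have hnn : 0 ≤ ∑ i ∈ BS, u i * u i :=
      Finset.sum_nonneg fun i _ => mul_nonneg (hu i) (hu i)
    nlinarith [hsum1, hsum2, hCS]
  -- WW block
  have hWW : 0 ≤ ∑ i ∈ WS, ∑ j ∈ WS, MM a b K i j * u i * u j := by
    have hterm : ∀ i ∈ WS, ∀ j ∈ WS,
        (if i = j then ((a:ℝ) - 2) * (u i * u j) else 0)
          - (if (j ≠ i ∧ K.ecol i j = EColor.gray) then (u i^2 + u j^2)/2 else 0)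
        ≤ MM a b K i j * u i * u j := by
      intro i hi j hj
      by_cases hij : i = j
      · subst hij
        rw [if_pos rfl, if_neg (by simp)]
        have : MM a b K i i = (a:ℝ) - 2 := by simp [MM, hvW i hi]
        rw [this]; ring_nf; exact le_refl _
      · rw [if_neg hij]
        cases hec : K.ecol i j
        · exact absurd hec (FW i hi j hj hij)
        · rw [if_pos ⟨fun hh => hij hh.symm, rfl⟩]
          have hMM : MM a b K i j = -1 := by simp [MM, hij, hec]
          rw [hMM]
          nlinarith [two_mul_le_add_sq (u i) (u j)]
        · rw [if_neg (by simp)]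
          have hMM : MM a b K i j = (b:ℝ) - 1 := by simp [MM, hij, hec]
          rw [hMM]
          nlinarith [mul_nonneg (hu i) (hu j)]
    have hsum1 : ∑ i ∈ WS, ∑ j ∈ WS,
        ((if i = j then ((a:ℝ) - 2) * (u i * u j) else 0)
          - (if (j ≠ i ∧ K.ecol i j = EColor.gray) then (u i^2 + u j^2)/2 else 0))
        ≤ ∑ i ∈ WS, ∑ j ∈ WS, MM a b K i j * u i * u j :=
      Finset.sum_le_sum fun i hi => Finset.sum_le_sum fun j hj => hterm i hi j hj
    -- compute the lower bound sum
    have hdiag : ∀ i ∈ WS, ∑ j ∈ WS, (if i = j then ((a:ℝ) - 2) * (u i * u j) else 0)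
        = ((a:ℝ) - 2) * (u i * u i) := by
      intro i hi
      rw [Finset.sum_ite_eq WS i (fun j => ((a:ℝ) - 2) * (u i * u j)), if_pos hi]
    have hpen : ∀ i ∈ WS, ∑ j ∈ WS, (if (j ≠ i ∧ K.ecol i j = EColor.gray) then (u i^2 + u j^2)/2 else 0)
        = ∑ j ∈ C i, (u i^2 + u j^2)/2 := by
      intro i hi
      rw [hC]
      exact (Finset.sum_filter _ _).symm
    have hswap : ∑ i ∈ WS, ∑ j ∈ C i, u j^2 = ∑ i ∈ WS, ((C i).card : ℝ) * u i^2 := by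
      have hcomm : ∑ i ∈ WS, ∑ j ∈ C i, (fun i j => u j^2) i j
          = ∑ j ∈ WS, ∑ i ∈ C j, (fun i j => u j^2) i j := by
        apply Finset.sum_comm'
        intro x y
        constructor
        · rintro ⟨hx, hy⟩
          obtain ⟨hyW, hyx, hg⟩ := (hCmem x y).mp hy
          refine ⟨(hCmem y x).mpr ⟨hx, fun hh => hyx hh.symm, ?_⟩, hyW⟩
          rw [K.ecol_symm]; exact hg
        · rintro ⟨hx, hy⟩
          obtain ⟨hxW, hxy, hg⟩ := (hCmem y x).mp hx
          refine ⟨hxW, (hCmem x y).mpr ⟨hy, fun hh => hxy hh.symm, ?_⟩⟩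
          rw [K.ecol_symm]; exact hg
      simp only at hcomm
      rw [hcomm]
      exact Finset.sum_congr rfl fun j _ => by
        rw [Finset.sum_const, nsmul_eq_mul]
    have hpen2 : ∑ i ∈ WS, ∑ j ∈ C i, (u i^2 + u j^2)/2 = ∑ i ∈ WS, ((C i).card : ℝ) * u i^2 := by
      have hsplit2 : ∑ i ∈ WS, ∑ j ∈ C i, (u i^2 + u j^2)/2
          = (∑ i ∈ WS, ((C i).card : ℝ) * (u i^2/2)) + ∑ i ∈ WS, ∑ j ∈ C i, u j^2/2 := by
        rw [← Finset.sum_add_distrib]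
        apply Finset.sum_congr rfl
        intro i hi
        rw [show (∑ j ∈ C i, (u i^2 + u j^2)/2) = ∑ j ∈ C i, (u i^2/2 + u j^2/2) from
          Finset.sum_congr rfl fun j _ => by ring]
        rw [Finset.sum_add_distrib, Finset.sum_const, nsmul_eq_mul]
      have hhalf : ∑ i ∈ WS, ∑ j ∈ C i, u j^2/2 = ∑ i ∈ WS, ((C i).card : ℝ) * (u i^2/2) := by
        have h2' : ∑ i ∈ WS, ∑ j ∈ C i, u j^2/2 = (∑ i ∈ WS, ∑ j ∈ C i, u j^2)/2 := by
          rw [Finset.sum_div]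
          exact Finset.sum_congr rfl fun i _ => by rw [Finset.sum_div]
        rw [h2', hswap, Finset.sum_div]
        exact Finset.sum_congr rfl fun i _ => by ring
      rw [hsplit2, hhalf, ← Finset.sum_add_distrib]
      exact Finset.sum_congr rfl fun i _ => by ring
    have hsum2 : ∑ i ∈ WS, ∑ j ∈ WS,
        ((if i = j then ((a:ℝ) - 2) * (u i * u j) else 0)
          - (if (j ≠ i ∧ K.ecol i j = EColor.gray) then (u i^2 + u j^2)/2 else 0))
        = (∑ i ∈ WS, ((a:ℝ) - 2) * (u i * u i)) - ∑ i ∈ WS, ∑ j ∈ C i, (u i^2 + u j^2)/2 := by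
      rw [show (∑ i ∈ WS, ∑ j ∈ WS, ((if i = j then ((a:ℝ) - 2) * (u i * u j) else 0)
          - (if (j ≠ i ∧ K.ecol i j = EColor.gray) then (u i^2 + u j^2)/2 else 0)))
        = ∑ i ∈ WS, (((a:ℝ) - 2) * (u i * u i) - ∑ j ∈ C i, (u i^2 + u j^2)/2) from
        Finset.sum_congr rfl fun i hi => by
          rw [Finset.sum_sub_distrib, hdiag i hi, hpen i hi]]
      rw [Finset.sum_sub_distrib]
    have hfin : 0 ≤ (∑ i ∈ WS, ((a:ℝ) - 2) * (u i * u i)) - ∑ i ∈ WS, ∑ j ∈ C i, (u i^2 + u j^2)/2 := by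
      rw [hpen2, ← Finset.sum_sub_distrib]
      apply Finset.sum_nonneg
      intro i hi
      have hcc : ((C i).card : ℝ) ≤ (a:ℝ) - 2 := by
        have h1 : (C i).card ≤ a - 2 := cardC i hi
        have h2 : ((C i).card : ℝ) ≤ ((a - 2 : ℕ) : ℝ) := by exact_mod_cast h1
        have h3 : ((a - 2 : ℕ) : ℝ) = (a:ℝ) - 2 := by
          have haa : (2:ℕ) ≤ a := ha
          push_cast [Nat.cast_sub haa]
          ring
        linarith [h2, h3.le]
      nlinarith [sq_nonneg (u i)]
    linarith [hsum1, hsum2, hfin]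
  rw [hQS, hsplit]
  linarith [hWW, hWB, hBW, hBB]

lemma key (a b : ℕ) (ha : 2 ≤ a) (hb : 1 ≤ b) (K : CRG)
    (h : ¬ CHom (cliquePlusEmpty a b) K) :
    ∀ (N : ℕ) (u : Fin K.n → ℝ), (∀ i, 0 ≤ u i) →
      (univ.filter (fun i : Fin K.n => u i ≠ 0)).card ≤ N → 0 ≤ Bf (MM a b K) u u := by
  intro N
  induction N with
  | zero =>
    intro u hu hc
    have hall : ∀ i : Fin K.n, u i = 0 := by
      intro i; by_contra hne
      have hmem : i ∈ univ.filter (fun i : Fin K.n => u i ≠ 0) :=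
        mem_filter.mpr ⟨mem_univ _, hne⟩
      have := Finset.card_pos.mpr ⟨i, hmem⟩
      omega
    apply le_of_eq; symm
    apply Finset.sum_eq_zero; intro i _
    apply Finset.sum_eq_zero; intro j _
    rw [hall i]; ring
  | succ N ih =>
    intro u hu hc
    by_cases hbad : ∃ i j : Fin K.n, i ≠ j ∧ u i ≠ 0 ∧ u j ≠ 0 ∧
        MM a b K i i + MM a b K j j ≤ 2 * MM a b K i j
    · obtain ⟨i, j, hij, hui, huj, hA⟩ := hbad
      rcases le_total (∑ k, MM a b K i k * u k) (∑ k, MM a b K j k * u k) with hL | hL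
      · obtain ⟨u', hu', hsupp, hle⟩ :=
          merge_step (MM a b K) (MM_symm a b K) u hu i j hij hui hA hL
        refine le_trans (ih u' hu' ?_) hle
        have hsub : univ.filter (fun k : Fin K.n => u' k ≠ 0)
            ⊆ (univ.filter (fun k : Fin K.n => u k ≠ 0)).erase j := by
          intro k hk
          obtain ⟨hkj, hk0⟩ := hsupp k (mem_filter.mp hk).2
          exact Finset.mem_erase.mpr ⟨hkj, mem_filter.mpr ⟨mem_univ _, hk0⟩⟩
        have hjm : j ∈ univ.filter (fun k : Fin K.n => u k ≠ 0) :=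
          mem_filter.mpr ⟨mem_univ _, huj⟩
        have hcc := Finset.card_le_card hsub
        rw [Finset.card_erase_of_mem hjm] at hcc
        have hpos := Finset.card_pos.mpr ⟨j, hjm⟩
        omega
      · have hA' : MM a b K j j + MM a b K i i ≤ 2 * MM a b K j i := by
          rw [MM_symm a b K j i]; linarith
        obtain ⟨u', hu', hsupp, hle⟩ :=
          merge_step (MM a b K) (MM_symm a b K) u hu j i (Ne.symm hij) huj hA' hL
        refine le_trans (ih u' hu' ?_) hle
        have hsub : univ.filter (fun k : Fin K.n => u' k ≠ 0)
            ⊆ (univ.filter (fun k : Fin K.n => u k ≠ 0)).erase i := by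
          intro k hk
          obtain ⟨hki, hk0⟩ := hsupp k (mem_filter.mp hk).2
          exact Finset.mem_erase.mpr ⟨hki, mem_filter.mpr ⟨mem_univ _, hk0⟩⟩
        have him : i ∈ univ.filter (fun k : Fin K.n => u k ≠ 0) :=
          mem_filter.mpr ⟨mem_univ _, hui⟩
        have hcc := Finset.card_le_card hsub
        rw [Finset.card_erase_of_mem him] at hcc
        have hpos := Finset.card_pos.mpr ⟨i, him⟩
        omega
    · push_neg at hbad
      exact irred a b ha hb K h u hu hbad

lemma count_id (a b : ℕ) (K : CRG) :
    ∑ i, ∑ j, (MM a b K i j + 1)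
    = ((a:ℝ)-1) * ((univ.filter (fun i : Fin K.n => K.vcol i = false)).card : ℝ)
      + (b:ℝ) * ((univ.filter (fun i : Fin K.n => K.vcol i = true)).card : ℝ)
      + ((a:ℝ)-1) * ((univ.filter (fun ij : Fin K.n × Fin K.n =>
          ij.1 ≠ ij.2 ∧ K.ecol ij.1 ij.2 = EColor.white)).card : ℝ)
      + (b:ℝ) * ((univ.filter (fun ij : Fin K.n × Fin K.n =>
          ij.1 ≠ ij.2 ∧ K.ecol ij.1 ij.2 = EColor.black)).card : ℝ) := by
  classical
  have hpt : ∀ i j : Fin K.n, MM a b K i j + 1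
      = (if i = j ∧ K.vcol i = false then (a:ℝ)-1 else 0)
        + (if i = j ∧ K.vcol i = true then (b:ℝ) else 0)
        + (if i ≠ j ∧ K.ecol i j = EColor.white then (a:ℝ)-1 else 0)
        + (if i ≠ j ∧ K.ecol i j = EColor.black then (b:ℝ) else 0) := by
    intro i j
    by_cases hij : i = j
    · subst hij
      cases hv : K.vcol i <;> simp [MM, hv] <;> ring
    · cases he : K.ecol i j <;> simp [MM, hij, he] <;> ring
  rw [Finset.sum_congr rfl fun i _ => Finset.sum_congr rfl fun j _ => hpt i j]
  simp only [Finset.sum_add_distrib]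
  have hv1 : ∑ i : Fin K.n, ∑ j : Fin K.n, (if i = j ∧ K.vcol i = false then (a:ℝ)-1 else 0)
      = ((a:ℝ)-1) * ((univ.filter (fun i : Fin K.n => K.vcol i = false)).card : ℝ) := by
    have hin : ∀ i : Fin K.n, (∑ j : Fin K.n, if i = j ∧ K.vcol i = false then (a:ℝ)-1 else 0)
        = (if K.vcol i = false then (a:ℝ)-1 else 0) := by
      intro i
      by_cases hv : K.vcol i = false
      · simp only [hv, and_true, if_pos]
        rw [Finset.sum_ite_eq univ i (fun _ => (a:ℝ)-1), if_pos (mem_univ i)]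
      · simp [hv]
    rw [Finset.sum_congr rfl fun i _ => hin i, ← Finset.sum_filter, Finset.sum_const,
      nsmul_eq_mul, mul_comm]
  have hv2 : ∑ i : Fin K.n, ∑ j : Fin K.n, (if i = j ∧ K.vcol i = true then (b:ℝ) else 0)
      = (b:ℝ) * ((univ.filter (fun i : Fin K.n => K.vcol i = true)).card : ℝ) := by
    have hin : ∀ i : Fin K.n, (∑ j : Fin K.n, if i = j ∧ K.vcol i = true then (b:ℝ) else 0)
        = (if K.vcol i = true then (b:ℝ) else 0) := by
      intro i
      by_cases hv : K.vcol i = true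
      · simp only [hv, and_true, if_pos]
        rw [Finset.sum_ite_eq univ i (fun _ => (b:ℝ)), if_pos (mem_univ i)]
      · simp [hv]
    rw [Finset.sum_congr rfl fun i _ => hin i, ← Finset.sum_filter, Finset.sum_const,
      nsmul_eq_mul, mul_comm]
  rw [hv1, hv2]
  have hw : (∑ i : Fin K.n, ∑ j : Fin K.n, if i ≠ j ∧ K.ecol i j = EColor.white then (a:ℝ)-1 else 0)
      = ((a:ℝ)-1) * ((univ.filter (fun ij : Fin K.n × Fin K.n =>
          ij.1 ≠ ij.2 ∧ K.ecol ij.1 ij.2 = EColor.white)).card : ℝ) := by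
    rw [Finset.card_filter]
    push_cast
    rw [Fintype.sum_prod_type, Finset.mul_sum]
    apply Finset.sum_congr rfl; intro i _
    rw [Finset.mul_sum]
    apply Finset.sum_congr rfl; intro j _
    by_cases hp : i ≠ j ∧ K.ecol i j = EColor.white
    · simp [hp]
    · simp [hp]
  have hbk : (∑ i : Fin K.n, ∑ j : Fin K.n, if i ≠ j ∧ K.ecol i j = EColor.black then (b:ℝ) else 0)
      = (b:ℝ) * ((univ.filter (fun ij : Fin K.n × Fin K.n =>
          ij.1 ≠ ij.2 ∧ K.ecol ij.1 ij.2 = EColor.black)).card : ℝ) := by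
    rw [Finset.card_filter]
    push_cast
    rw [Fintype.sum_prod_type, Finset.mul_sum]
    apply Finset.sum_congr rfl; intro i _
    rw [Finset.mul_sum]
    apply Finset.sum_congr rfl; intro j _
    by_cases hp : i ≠ j ∧ K.ecol i j = EColor.black
    · simp [hp]
    · simp [hp]
  rw [hw, hbk]
end KaEb

theorem fK_lower_bound_KaEb (a b : ℕ) (ha : 2 ≤ a) (hb : 1 ≤ b) (K : CRG)
    (h : ¬ CHom (cliquePlusEmpty a b) K) :
    1 / ((a : ℝ) + (b : ℝ) - 1) ≤ K.fK (((a : ℝ) - 1) / ((a : ℝ) + (b : ℝ) - 1)) := by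
  classical
  have haR : (2:ℝ) ≤ (a:ℝ) := by exact_mod_cast ha
  have hbR : (1:ℝ) ≤ (b:ℝ) := by exact_mod_cast hb
  have hr : (0:ℝ) < (a:ℝ) + (b:ℝ) - 1 := by linarith
  have hn : (0:ℝ) < (K.n:ℝ) := by exact_mod_cast K.npos
  have hmain : 0 ≤ KaEb.Bf (KaEb.MM a b K) (fun _ => 1) (fun _ => 1) :=
    KaEb.key a b ha hb K h
      ((Finset.univ.filter (fun i : Fin K.n => (1:ℝ) ≠ 0)).card)
      (fun _ => 1) (fun _ => by norm_num) le_rfl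
  have e2 : KaEb.Bf (KaEb.MM a b K) (fun _ => 1) (fun _ => 1)
      = ∑ i : Fin K.n, ∑ j : Fin K.n, KaEb.MM a b K i j := by
    unfold KaEb.Bf
    exact Finset.sum_congr rfl fun i _ => Finset.sum_congr rfl fun j _ => by ring
  have hsum : ∑ i : Fin K.n, ∑ j : Fin K.n, (KaEb.MM a b K i j + 1)
      = (∑ i : Fin K.n, ∑ j : Fin K.n, KaEb.MM a b K i j) + (K.n : ℝ) * (K.n : ℝ) := by
    have e1 : ∀ i : Fin K.n, (∑ j : Fin K.n, (KaEb.MM a b K i j + 1))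
        = (∑ j : Fin K.n, KaEb.MM a b K i j) + (K.n:ℝ) := by
      intro i
      rw [Finset.sum_add_distrib]
      simp [Finset.card_univ]
    rw [Finset.sum_congr rfl fun i _ => e1 i, Finset.sum_add_distrib]
    simp [Finset.card_univ]
  have hcnt := KaEb.count_id a b K
  set X : ℝ := ((Finset.univ.filter (fun i : Fin K.n => K.vcol i = false)).card : ℝ)
      + ((Finset.univ.filter (fun ij : Fin K.n × Fin K.n =>
          ij.1 ≠ ij.2 ∧ K.ecol ij.1 ij.2 = EColor.white)).card : ℝ) with hX
  set Y : ℝ := ((Finset.univ.filter (fun i : Fin K.n => K.vcol i = true)).card : ℝ)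
      + ((Finset.univ.filter (fun ij : Fin K.n × Fin K.n =>
          ij.1 ≠ ij.2 ∧ K.ecol ij.1 ij.2 = EColor.black)).card : ℝ) with hY
  have hineq : ((K.n:ℝ)) * (K.n:ℝ) ≤ ((a:ℝ)-1) * X + (b:ℝ) * Y := by
    rw [hX, hY]
    nlinarith [hmain, e2, hsum, hcnt]
  have hXnn : 0 ≤ X := by rw [hX]; positivity
  have hYnn : 0 ≤ Y := by rw [hY]; positivity
  have h1p : 1 - ((a:ℝ)-1)/((a:ℝ)+(b:ℝ)-1) = (b:ℝ)/((a:ℝ)+(b:ℝ)-1) := by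
    field_simp
    ring
  show 1 / ((a : ℝ) + (b : ℝ) - 1) ≤ (1 / (K.n : ℝ) ^ 2) *
    ((((a : ℝ) - 1) / ((a : ℝ) + (b : ℝ) - 1)) * X
     + (1 - (((a : ℝ) - 1) / ((a : ℝ) + (b : ℝ) - 1))) * Y)
  rw [h1p]
  have hstep : ((a:ℝ)-1)/((a:ℝ)+(b:ℝ)-1) * X + (b:ℝ)/((a:ℝ)+(b:ℝ)-1) * Y
      = (((a:ℝ)-1) * X + (b:ℝ) * Y) / ((a:ℝ)+(b:ℝ)-1) := by ring
  rw [hstep]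
  have hden : (0:ℝ) < (K.n:ℝ)^2 * ((a:ℝ)+(b:ℝ)-1) := by positivity
  calc 1 / ((a:ℝ)+(b:ℝ)-1)
      = ((K.n:ℝ) * (K.n:ℝ)) / ((K.n:ℝ)^2 * ((a:ℝ)+(b:ℝ)-1)) := by
        rw [div_eq_div_iff hr.ne' hden.ne']
        ring
    _ ≤ (((a:ℝ)-1) * X + (b:ℝ) * Y) / ((K.n:ℝ)^2 * ((a:ℝ)+(b:ℝ)-1)) := by
        gcongr
    _ = (1 / (K.n : ℝ) ^ 2) * ((((a:ℝ)-1) * X + (b:ℝ) * Y) / ((a:ℝ)+(b:ℝ)-1)) := by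
        rw [div_mul_div_comm, one_mul]
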